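/- If real numbers b and c each satisfy condition (c), then b + c satisfies condition (c). -/

import Mathlib

/-- Condition (c): `b` is a nonnegative real algebraic integer and every complex
root of its minimal polynomial over `ℚ` has modulus at most `b`. -/
def CondC (b : ℝ) : Prop :=
  0 ≤ b ∧ IsIntegral ℤ b ∧
    ∀ z ∈ ((minpoly ℚ b).map (algebraMap ℚ ℂ)).roots, ‖z‖ ≤ b

theorem condC_add (b c : ℝ) (hb : CondC b) (hc : CondC c) : CondC (b + c) := by
  obtain ⟨hb0, hbi, hbroot⟩ := hb
  obtain ⟨hc0, hci, hcroot⟩ := hc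
  refine ⟨add_nonneg hb0 hc0, hbi.add hci, ?_⟩
  intro z hz
  set b' : ℂ := (b : ℂ) with hb'
  set c' : ℂ := (c : ℂ) with hc'
  have hbi' : IsIntegral ℚ b' := ((hbi.map (IsScalarTower.toAlgHom ℤ ℝ ℂ)).tower_top : IsIntegral ℚ b')
  have hci' : IsIntegral ℚ c' := ((hci.map (IsScalarTower.toAlgHom ℤ ℝ ℂ)).tower_top : IsIntegral ℚ c')
  set K := IntermediateField.adjoin ℚ ({b', c'} : Set ℂ) with hK
  have hbK : b' ∈ K := IntermediateField.subset_adjoin _ _ (by simp)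
  have hcK : c' ∈ K := IntermediateField.subset_adjoin _ _ (by simp)
  have : FiniteDimensional ℚ K := by
    apply IntermediateField.finiteDimensional_adjoin
    intro x hx
    rcases hx with h | h
    · exact h ▸ hbi'
    · simp only [Set.mem_singleton_iff] at h; exact h ▸ hci'
  have : NumberField K := ⟨⟩
  set bK : K := ⟨b', hbK⟩
  set cK : K := ⟨c', hcK⟩
  set x : K := bK + cK with hx
  have hinj : Function.Injective (algebraMap K ℂ) := (algebraMap K ℂ).injective
  have hminx : minpoly ℚ x = minpoly ℚ (b + c : ℝ) := by
    have h1 : minpoly ℚ (algebraMap K ℂ x) = minpoly ℚ x := minpoly.algebraMap_eq hinj x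
    have h2 : minpoly ℚ (algebraMap ℝ ℂ (b + c)) = minpoly ℚ (b + c : ℝ) :=
      minpoly.algebraMap_eq (algebraMap ℝ ℂ).injective _
    have h3 : algebraMap K ℂ x = algebraMap ℝ ℂ (b + c) := by
      push_cast
      rfl
    rw [← h1, h3, h2]
  -- z is in the rootSet of minpoly ℚ x
  have hzr : z ∈ (minpoly ℚ x).rootSet ℂ := by
    rw [Polynomial.mem_rootSet', hminx]
    rw [Polynomial.mem_roots'] at hz
    exact ⟨hz.1, by rw [Polynomial.aeval_def, ← Polynomial.eval_map]; exact hz.2⟩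
  rw [← NumberField.Embeddings.range_eval_eq_rootSet_minpoly K ℂ x] at hzr
  obtain ⟨φ₀, hφ⟩ := hzr
  set φ : K →ₐ[ℚ] ℂ := φ₀.toRatAlgHom with hφdef
  have hφx : φ x = z := hφ
  -- φ bK is a root of minpoly ℚ b mapped to ℂ
  have key : ∀ (y : K) (r : ℝ), algebraMap K ℂ y = algebraMap ℝ ℂ r → IsIntegral ℚ r →
      (∀ w ∈ ((minpoly ℚ r).map (algebraMap ℚ ℂ)).roots, ‖w‖ ≤ r) →
      ‖φ y‖ ≤ r := by
    intro y r hyr hri hroot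
    apply hroot
    rw [Polynomial.mem_roots']
    have hmin : minpoly ℚ y = minpoly ℚ r := by
      rw [← minpoly.algebraMap_eq hinj y, hyr, minpoly.algebraMap_eq (algebraMap ℝ ℂ).injective]
    constructor
    · exact (Polynomial.map_ne_zero_iff (algebraMap ℚ ℂ).injective).mpr (minpoly.ne_zero hri)
    · have : Polynomial.aeval (φ y) (minpoly ℚ r) = 0 := by
        rw [← hmin, Polynomial.aeval_algHom_apply, minpoly.aeval, map_zero]
      rwa [Polynomial.aeval_def, ← Polynomial.eval_map] at this
  have hbb : ‖φ bK‖ ≤ b := key bK b rfl hbi.tower_top hbroot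
  have hcc : ‖φ cK‖ ≤ c := key cK c rfl hci.tower_top hcroot
  have hz2 : z = φ bK + φ cK := by rw [← hφx, hx, map_add]
  rw [hz2]
  exact (norm_add_le _ _).trans (add_le_add hbb hcc)
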